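/- If four pairwise skew lines in projective 3-space over a field (char ≠ 2) admit four pairwise distinct transversal lines (each meeting all four), then the four lines belong to a regulus, i.e., they are rulings of a common doubly ruled quadric surface. -/

import Mathlib

open Submodule

abbrev Subsp (K : Type*) [Field K] := Submodule K (Fin 4 → K)

variable {K : Type*} [Field K]

def isPoint (S : Subsp K) : Prop := Module.finrank K ↥S = 1
def isLine  (S : Subsp K) : Prop := Module.finrank K ↥S = 2
def isPlane (S : Subsp K) : Prop := Module.finrank K ↥S = 3
def skew (L M : Subsp K) : Prop := L ⊓ M = ⊥
def meets (L M : Subsp K) : Prop := L ⊓ M ≠ ⊥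
def regulus4 (A B C D : Subsp K) : Prop :=
  (skew A B ∧ skew A C ∧ skew A D ∧ skew B C ∧ skew B D ∧ skew C D) ∧
  ∀ T : Subsp K, isLine T →
    ((meets T A → meets T B → meets T C → meets T D) ∧
     (meets T A → meets T B → meets T D → meets T C) ∧
     (meets T A → meets T C → meets T D → meets T B) ∧
     (meets T B → meets T C → meets T D → meets T A))

namespace FourTransversals

/-- Explicit formula for the determinant of a 4×4 matrix. -/
theorem det_fin_four (M : Matrix (Fin 4) (Fin 4) K) : M.det =
    M 0 0 * M 1 1 * M 2 2 * M 3 3 - M 0 0 * M 1 1 * M 2 3 * M 3 2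
  - M 0 0 * M 1 2 * M 2 1 * M 3 3 + M 0 0 * M 1 2 * M 2 3 * M 3 1
  + M 0 0 * M 1 3 * M 2 1 * M 3 2 - M 0 0 * M 1 3 * M 2 2 * M 3 1
  - M 0 1 * M 1 0 * M 2 2 * M 3 3 + M 0 1 * M 1 0 * M 2 3 * M 3 2
  + M 0 1 * M 1 2 * M 2 0 * M 3 3 - M 0 1 * M 1 2 * M 2 3 * M 3 0
  - M 0 1 * M 1 3 * M 2 0 * M 3 2 + M 0 1 * M 1 3 * M 2 2 * M 3 0
  + M 0 2 * M 1 0 * M 2 1 * M 3 3 - M 0 2 * M 1 0 * M 2 3 * M 3 1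
  - M 0 2 * M 1 1 * M 2 0 * M 3 3 + M 0 2 * M 1 1 * M 2 3 * M 3 0
  + M 0 2 * M 1 3 * M 2 0 * M 3 1 - M 0 2 * M 1 3 * M 2 1 * M 3 0
  - M 0 3 * M 1 0 * M 2 1 * M 3 2 + M 0 3 * M 1 0 * M 2 2 * M 3 1
  + M 0 3 * M 1 1 * M 2 0 * M 3 2 - M 0 3 * M 1 1 * M 2 2 * M 3 0
  - M 0 3 * M 1 2 * M 2 0 * M 3 1 + M 0 3 * M 1 2 * M 2 1 * M 3 0 := by
  rw [Matrix.det_succ_row_zero]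
  simp [Fin.sum_univ_succ, Matrix.det_fin_three, Matrix.submatrix_apply,
    Fin.succAbove]
  ring

section
variable {α : Type*}
lemma vec6_zero (a b c d e f : α) : (![a,b,c,d,e,f] : Fin 6 → α) 0 = a := rfl
lemma vec6_one (a b c d e f : α) : (![a,b,c,d,e,f] : Fin 6 → α) 1 = b := rfl
lemma vec6_two (a b c d e f : α) : (![a,b,c,d,e,f] : Fin 6 → α) 2 = c := rfl
lemma vec6_three (a b c d e f : α) : (![a,b,c,d,e,f] : Fin 6 → α) 3 = d := rfl
lemma vec6_four (a b c d e f : α) : (![a,b,c,d,e,f] : Fin 6 → α) 4 = e := rfl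
lemma vec6_five (a b c d e f : α) : (![a,b,c,d,e,f] : Fin 6 → α) 5 = f := rfl
end

/-- Plücker coordinates of a pair of vectors in `K⁴`. -/
def pl (u v : Fin 4 → K) : Fin 6 → K :=
  ![u 0 * v 1 - u 1 * v 0, u 0 * v 2 - u 2 * v 0, u 0 * v 3 - u 3 * v 0,
    u 1 * v 2 - u 2 * v 1, u 1 * v 3 - u 3 * v 1, u 2 * v 3 - u 3 * v 2]

/-- The (symmetric bilinear) Plücker pairing on `K⁶`. -/
def F (p q : Fin 6 → K) : K :=
  p 0 * q 5 - p 1 * q 4 + p 2 * q 3 + p 3 * q 2 - p 4 * q 1 + p 5 * q 0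

lemma F_symm (p q : Fin 6 → K) : F p q = F q p := by simp only [F]; ring

lemma F_pl_pl (u v w x : Fin 4 → K) :
    F (pl u v) (pl w x) = (Matrix.of ![u, v, w, x]).det := by
  rw [det_fin_four]
  simp only [Matrix.of_apply,
    show (![u, v, w, x] : Fin 4 → Fin 4 → K) 0 = u from rfl,
    show (![u, v, w, x] : Fin 4 → Fin 4 → K) 1 = v from rfl,
    show (![u, v, w, x] : Fin 4 → Fin 4 → K) 2 = w from rfl,
    show (![u, v, w, x] : Fin 4 → Fin 4 → K) 3 = x from rfl]
  simp only [F, pl, vec6_zero, vec6_one, vec6_two, vec6_three, vec6_four, vec6_five]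
  ring

lemma F_self (u v : Fin 4 → K) : F (pl u v) (pl u v) = 0 := by
  simp only [F, pl, vec6_zero, vec6_one, vec6_two, vec6_three, vec6_four, vec6_five]
  ring

lemma F_comb3_right (w p q r : Fin 6 → K) (X Y Z : K) :
    F w (X • p + Y • q + Z • r) = X * F w p + Y * F w q + Z * F w r := by
  simp [F, Pi.add_apply, Pi.smul_apply, smul_eq_mul]; ring

lemma F_comb6_left (v0 v1 v2 v3 v4 v5 w : Fin 6 → K) (g0 g1 g2 g3 g4 g5 : K) :
    F (g0 • v0 + g1 • v1 + g2 • v2 + g3 • v3 + g4 • v4 + g5 • v5) w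
      = g0 * F v0 w + g1 * F v1 w + g2 * F v2 w + g3 * F v3 w
        + g4 * F v4 w + g5 * F v5 w := by
  simp [F, Pi.add_apply, Pi.smul_apply, smul_eq_mul]; ring

/-- Every line (2-dimensional subspace) is the span of two independent vectors. -/
lemma line_rep (L : Subsp K) (hL : isLine L) :
    ∃ u v : Fin 4 → K, LinearIndependent K ![u, v] ∧
      L = span K (Set.range ![u, v]) := by
  have : Module.Finite K L := by infer_instance
  let b : Module.Basis (Fin 2) K L := Module.finBasisOfFinrankEq K L hL
  refine ⟨(b 0 : Fin 4 → K), (b 1 : Fin 4 → K), ?_, ?_⟩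
  · have h1 : LinearIndependent K (fun i => ((b i : L) : Fin 4 → K)) :=
      b.linearIndependent.map' L.subtype (ker_subtype L)
    have he : ![(b 0 : Fin 4 → K), (b 1 : Fin 4 → K)]
        = fun i => ((b i : L) : Fin 4 → K) := by
      funext i
      fin_cases i <;> rfl
    rw [he]; exact h1
  · have hsp : span K (Set.range ⇑b) = (⊤ : Submodule K L) := b.span_eq
    symm
    have hfe : ![(b 0 : Fin 4 → K), (b 1 : Fin 4 → K)] = (⇑L.subtype ∘ ⇑b) := by
      funext i
      fin_cases i <;> rfl
    have himg : Set.range ![(b 0 : Fin 4 → K), (b 1 : Fin 4 → K)]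
        = ⇑L.subtype '' Set.range ⇑b := by
      rw [hfe]
      exact Set.range_comp _ _
    rw [himg, ← Submodule.map_span, hsp, Submodule.map_top, range_subtype]

/-- Two lines are skew iff the Plücker pairing of their coordinates is nonzero. -/
lemma skew_iff_F {L M : Subsp K} {u v w x : Fin 4 → K}
    (hL : isLine L) (hM : isLine M)
    (hLs : L = span K (Set.range ![u, v])) (hMs : M = span K (Set.range ![w, x])) :
    L ⊓ M = ⊥ ↔ F (pl u v) (pl w x) ≠ 0 := by
  have hsup : L ⊔ M = span K (Set.range ![u, v, w, x]) := by
    rw [hLs, hMs, ← Submodule.span_union]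
    congr 1
    simp [Matrix.range_cons, Matrix.range_empty, Set.insert_union]
  have hrank : Module.finrank K ↥(L ⊔ M) + Module.finrank K ↥(L ⊓ M) = 4 := by
    rw [Submodule.finrank_sup_add_finrank_inf_eq, hL, hM]
  have hind : F (pl u v) (pl w x) ≠ 0 ↔ LinearIndependent K ![u, v, w, x] := by
    rw [F_pl_pl]
    constructor
    · intro hdet
      have : IsUnit (Matrix.of ![u, v, w, x]) :=
        (Matrix.isUnit_iff_isUnit_det _).mpr (isUnit_iff_ne_zero.mpr hdet)
      exact Matrix.linearIndependent_rows_iff_isUnit.mpr this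
    · intro hli
      have : IsUnit (Matrix.of ![u, v, w, x]) :=
        Matrix.linearIndependent_rows_iff_isUnit.mp hli
      exact ((Matrix.isUnit_iff_isUnit_det _).mp this).ne_zero
  rw [hind, linearIndependent_iff_card_eq_finrank_span]
  have hcard : (Fintype.card (Fin 4)) = 4 := by simp
  rw [hcard]
  have hfs : Set.finrank K (Set.range ![u, v, w, x])
      = Module.finrank K ↥(L ⊔ M) := by
    rw [hsup]; rfl
  rw [hfs]
  constructor
  · intro hbot
    rw [hbot] at hrank
    simp [finrank_bot] at hrank
    omega
  · intro h4
    have : Module.finrank K ↥(L ⊓ M) = 0 := by omega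
    exact Submodule.finrank_eq_zero.mp this

lemma meets_iff_F {L M : Subsp K} {u v w x : Fin 4 → K}
    (hL : isLine L) (hM : isLine M)
    (hLs : L = span K (Set.range ![u, v])) (hMs : M = span K (Set.range ![w, x])) :
    meets L M ↔ F (pl u v) (pl w x) = 0 := by
  exact (not_congr (skew_iff_F hL hM hLs hMs)).trans not_not

lemma finrank_pos_of_ne_bot {S : Subsp K} (h : S ≠ ⊥) :
    1 ≤ Module.finrank K ↥S := by
  by_contra hlt
  push_neg at hlt
  interval_cases h' : Module.finrank K ↥S
  · exact h (Submodule.finrank_eq_zero.mp h')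

/-- Two distinct transversals of three pairwise skew lines are skew. -/
lemma transversal_skew {A B C S T : Subsp K}
    (hA : isLine A) (hB : isLine B) (hC : isLine C) (hS : isLine S) (hT : isLine T)
    (hAB : skew A B) (hAC : skew A C) (hBC : skew B C)
    (hSA : meets S A) (hSB : meets S B) (hSC : meets S C)
    (hTA : meets T A) (hTB : meets T B) (hTC : meets T C)
    (hST : S ≠ T) : skew S T := by
  by_contra hc
  have hI : S ⊓ T ≠ ⊥ := hc
  -- the meeting point of S and T
  have hIle : S ⊓ T ≤ S := inf_le_left
  have hIrank : Module.finrank K ↥(S ⊓ T) = 1 := by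
    have h1 : 1 ≤ Module.finrank K ↥(S ⊓ T) := finrank_pos_of_ne_bot hI
    have h2 : Module.finrank K ↥(S ⊓ T) ≤ 2 := by
      have := Submodule.finrank_mono hIle
      rw [hS] at this
      exact this
    rcases Nat.eq_or_lt_of_le h1 with h | h
    · omega
    · exfalso
      have he : S ⊓ T = S := Submodule.eq_of_le_of_finrank_le hIle (by rw [hS]; omega)
      have hle2 : S ≤ T := by
        rw [← he]; exact inf_le_right
      exact hST (Submodule.eq_of_le_of_finrank_le hle2 (by rw [hS, hT]))

  -- the plane spanned by S and T
  have hPrank : Module.finrank K ↥(S ⊔ T) = 3 := by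
    have := Submodule.finrank_sup_add_finrank_inf_eq S T
    rw [hS, hT, hIrank] at this
    omega
  -- each of A, B, C is contained in the plane or passes through the point
  have key : ∀ X : Subsp K, isLine X → meets S X → meets T X →
      X ≤ S ⊔ T ∨ S ⊓ T ≤ X := by
    intro X hX hSX hTX
    by_cases hXP : X ≤ S ⊔ T
    · exact Or.inl hXP
    right
    have hXPlt : X ⊓ (S ⊔ T) < X := by
      rcases lt_or_eq_of_le (inf_le_left : X ⊓ (S ⊔ T) ≤ X) with h | h
      · exact h
      · exact absurd (by rw [← h]; exact inf_le_right) hXP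
    have hXPrank : Module.finrank K ↥(X ⊓ (S ⊔ T)) ≤ 1 := by
      have := Submodule.finrank_lt_finrank_of_lt hXPlt
      rw [hX] at this
      omega
    have hXS : X ⊓ S ≠ ⊥ := by rw [inf_comm]; exact hSX
    have hXT : X ⊓ T ≠ ⊥ := by rw [inf_comm]; exact hTX
    have hXSle : X ⊓ S ≤ X ⊓ (S ⊔ T) := inf_le_inf_left X le_sup_left
    have hXTle : X ⊓ T ≤ X ⊓ (S ⊔ T) := inf_le_inf_left X le_sup_right
    have hXSrank : Module.finrank K ↥(X ⊓ S) = 1 := by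
      have := Submodule.finrank_mono hXSle
      have h1 := finrank_pos_of_ne_bot hXS
      omega
    have hXTrank : Module.finrank K ↥(X ⊓ T) = 1 := by
      have := Submodule.finrank_mono hXTle
      have h1 := finrank_pos_of_ne_bot hXT
      omega
    have hXPe : Module.finrank K ↥(X ⊓ (S ⊔ T)) = 1 := by
      have := Submodule.finrank_mono hXSle
      omega
    have h1 : X ⊓ S = X ⊓ (S ⊔ T) :=
      Submodule.eq_of_le_of_finrank_le hXSle (by omega)
    have h2 : X ⊓ T = X ⊓ (S ⊔ T) :=
      Submodule.eq_of_le_of_finrank_le hXTle (by omega)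
    have h3 : X ⊓ S ≤ S ⊓ T := le_inf inf_le_right (by rw [h1, ← h2]; exact inf_le_right)
    have h4 : X ⊓ S = S ⊓ T :=
      Submodule.eq_of_le_of_finrank_le h3 (by omega)
    rw [← h4]
    exact inf_le_left
  -- two skew lines cannot both be inside a plane
  have no2 : ∀ X Y : Subsp K, isLine X → isLine Y → skew X Y →
      X ≤ S ⊔ T → Y ≤ S ⊔ T → False := by
    intro X Y hX hY hXY hXP hYP
    have hsum := Submodule.finrank_sup_add_finrank_inf_eq X Y
    rw [hX, hY, hXY, finrank_bot] at hsum
    have hle : X ⊔ Y ≤ S ⊔ T := sup_le hXP hYP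
    have := Submodule.finrank_mono hle
    omega
  -- two lines cannot both pass through the meeting point
  have no2' : ∀ X Y : Subsp K, skew X Y → S ⊓ T ≤ X → S ⊓ T ≤ Y → False := by
    intro X Y hXY hXp hYp
    exact hI (le_bot_iff.mp (by rw [← hXY]; exact le_inf hXp hYp))
  rcases key A hA (hSA) (hTA) with hA' | hA' <;>
    rcases key B hB (hSB) (hTB) with hB' | hB' <;>
      rcases key C hC (hSC) (hTC) with hC' | hC'
  · exact no2 A B hA hB hAB hA' hB'
  · exact no2 A B hA hB hAB hA' hB'
  · exact no2 A C hA hC hAC hA' hC'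
  · exact no2' B C hBC hB' hC'
  · exact no2 B C hB hC hBC hB' hC'
  · exact no2' A C hAC hA' hC'
  · exact no2' A B hAB hA' hB'
  · exact no2' A B hAB hA' hB'

/-- Solving the homogeneous system given by a 3×3 "Gram" matrix with zero
diagonal and nonzero off-diagonal entries (char ≠ 2). -/
lemma gram_solve {p q r x y z : K} (h2 : (2 : K) ≠ 0)
    (hp : p ≠ 0) (hq : q ≠ 0) (hr : r ≠ 0)
    (e1 : p * y + q * z = 0) (e2 : p * x + r * z = 0) (e3 : q * x + r * y = 0) :
    x = 0 ∧ y = 0 ∧ z = 0 := by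
  have hz : z = 0 := by
    have h : (2 * q * r) * z = 0 := by linear_combination q * e2 - p * e3 + r * e1
    have hne : (2 * q * r) ≠ 0 := mul_ne_zero (mul_ne_zero h2 hq) hr
    exact (mul_eq_zero.mp h).resolve_left hne
  have hx : x = 0 := by
    have h : p * x = 0 := by rw [hz] at e2; linear_combination e2
    exact (mul_eq_zero.mp h).resolve_left hp
  have hy : y = 0 := by
    have h : p * y = 0 := by rw [hz] at e1; linear_combination e1
    exact (mul_eq_zero.mp h).resolve_left hp
  exact ⟨hx, hy, hz⟩

lemma F_comb2_right (w p q : Fin 6 → K) (X Y : K) :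
    F w (X • p + Y • q) = X * F w p + Y * F w q := by
  simp [F, Pi.add_apply, Pi.smul_apply, smul_eq_mul]; ring

lemma F_comb2_left (p q w : Fin 6 → K) (X Y : K) :
    F (X • p + Y • q) w = X * F p w + Y * F q w := by
  simp [F, Pi.add_apply, Pi.smul_apply, smul_eq_mul]; ring

/-- The key linear algebra step: if `a,b,c,t1,t2,t3` have the stated Gram
matrix pattern and `d` is orthogonal to `t1,t2,t3`, then `d` is a linear
combination of `a`, `b`, `c`. -/
lemma span_extract (h2 : (2 : K) ≠ 0) (a b c t1 t2 t3 d : Fin 6 → K)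
    (hab : F a b ≠ 0) (hac : F a c ≠ 0) (hbc : F b c ≠ 0)
    (h12 : F t1 t2 ≠ 0) (h13 : F t1 t3 ≠ 0) (h23 : F t2 t3 ≠ 0)
    (hat1 : F a t1 = 0) (hat2 : F a t2 = 0) (hat3 : F a t3 = 0)
    (hbt1 : F b t1 = 0) (hbt2 : F b t2 = 0) (hbt3 : F b t3 = 0)
    (hct1 : F c t1 = 0) (hct2 : F c t2 = 0) (hct3 : F c t3 = 0)
    (haa : F a a = 0) (hbb : F b b = 0) (hcc : F c c = 0)
    (h11 : F t1 t1 = 0) (h22 : F t2 t2 = 0) (h33 : F t3 t3 = 0)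
    (hdt1 : F d t1 = 0) (hdt2 : F d t2 = 0) (hdt3 : F d t3 = 0) :
    ∃ X Y Z : K, d = X • a + Y • b + Z • c := by
  have hindep : LinearIndependent K ![a, b, c, t1, t2, t3] := by
    rw [Fintype.linearIndependent_iff]
    intro g hg
    rw [Fin.sum_univ_six] at hg
    simp only [vec6_zero, vec6_one, vec6_two, vec6_three, vec6_four, vec6_five] at hg
    have key : ∀ w, g 0 * F a w + g 1 * F b w + g 2 * F c w + g 3 * F t1 w
        + g 4 * F t2 w + g 5 * F t3 w = 0 := by
      intro w
      rw [← F_comb6_left, hg]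
      simp [F]
    have e1 : F t1 t2 * g 4 + F t1 t3 * g 5 = 0 := by
      have h := key t1
      rw [hat1, hbt1, hct1, h11, F_symm t2 t1, F_symm t3 t1] at h
      linear_combination h
    have e2 : F t1 t2 * g 3 + F t2 t3 * g 5 = 0 := by
      have h := key t2
      rw [hat2, hbt2, hct2, h22, F_symm t3 t2] at h
      linear_combination h
    have e3 : F t1 t3 * g 3 + F t2 t3 * g 4 = 0 := by
      have h := key t3
      rw [hat3, hbt3, hct3, h33] at h
      linear_combination h
    obtain ⟨hg3, hg4, hg5⟩ := gram_solve h2 h12 h13 h23 e1 e2 e3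
    have key' : ∀ w, g 0 * F a w + g 1 * F b w + g 2 * F c w = 0 := by
      intro w
      have h := key w
      rw [hg3, hg4, hg5] at h
      linear_combination h
    have e1' : F a b * g 1 + F a c * g 2 = 0 := by
      have h := key' a
      rw [haa, F_symm b a, F_symm c a] at h
      linear_combination h
    have e2' : F a b * g 0 + F b c * g 2 = 0 := by
      have h := key' b
      rw [hbb, F_symm c b] at h
      linear_combination h
    have e3' : F a c * g 0 + F b c * g 1 = 0 := by
      have h := key' c
      rw [hcc] at h
      linear_combination h
    obtain ⟨hg0, hg1, hg2⟩ := gram_solve h2 hab hac hbc e1' e2' e3'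
    intro i
    fin_cases i <;> assumption
  have hcard : Fintype.card (Fin 6) = Module.finrank K (Fin 6 → K) := by
    simp [Module.finrank_fin_fun]
  let bas := basisOfLinearIndependentOfCardEqFinrank hindep hcard
  have hbas : ⇑bas = ![a, b, c, t1, t2, t3] :=
    coe_basisOfLinearIndependentOfCardEqFinrank _ _
  have hrep := bas.sum_repr d
  rw [Fin.sum_univ_six] at hrep
  simp only [hbas, vec6_zero, vec6_one, vec6_two, vec6_three, vec6_four,
    vec6_five] at hrep
  set g : Fin 6 → K := fun i => bas.repr d i with hgdef
  have hrep' : g 0 • a + g 1 • b + g 2 • c + g 3 • t1 + g 4 • t2 + g 5 • t3 = d := hrep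
  have key2 : ∀ w, g 0 * F a w + g 1 * F b w + g 2 * F c w + g 3 * F t1 w
      + g 4 * F t2 w + g 5 * F t3 w = F d w := by
    intro w
    rw [← F_comb6_left, hrep']
  have e1 : F t1 t2 * g 4 + F t1 t3 * g 5 = 0 := by
    have h := key2 t1
    rw [hat1, hbt1, hct1, h11, F_symm t2 t1, F_symm t3 t1, hdt1] at h
    linear_combination h
  have e2 : F t1 t2 * g 3 + F t2 t3 * g 5 = 0 := by
    have h := key2 t2
    rw [hat2, hbt2, hct2, h22, F_symm t3 t2, hdt2] at h
    linear_combination h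
  have e3 : F t1 t3 * g 3 + F t2 t3 * g 4 = 0 := by
    have h := key2 t3
    rw [hat3, hbt3, hct3, h33, hdt3] at h
    linear_combination h
  obtain ⟨hg3, hg4, hg5⟩ := gram_solve h2 h12 h13 h23 e1 e2 e3
  refine ⟨g 0, g 1, g 2, ?_⟩
  rw [← hrep', hg3, hg4, hg5]
  simp

/-- A Plücker vector of a line skew to two lines cannot be a combination of
just their two Plücker vectors. -/
lemma coeff_ne (h2 : (2 : K) ≠ 0) {p q e : Fin 6 → K} {X Y : K}
    (hpp : F p p = 0) (hqq : F q q = 0) (hee : F e e = 0) (hpq : F p q ≠ 0)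
    (hpe : F p e ≠ 0) (hqe : F q e ≠ 0)
    (he : e = X • p + Y • q) : False := by
  have h1 : F p e = Y * F p q := by
    rw [he, F_comb2_right, hpp]; ring
  have h2' : F q e = X * F p q := by
    rw [he, F_comb2_right, hqq, F_symm q p]; ring
  have hY : Y ≠ 0 := by
    intro h0
    exact hpe (by rw [h1, h0, zero_mul])
  have hX : X ≠ 0 := by
    intro h0
    exact hqe (by rw [h2', h0, zero_mul])
  have hfe : F e e = X * F p e + Y * F q e := by
    nth_rewrite 1 [he]
    rw [F_comb2_left]
  have hzero : (2 : K) * X * Y * F p q = 0 := by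
    rw [h1, h2', hee] at hfe
    linear_combination -hfe
  exact (mul_ne_zero (mul_ne_zero (mul_ne_zero h2 hX) hY) hpq) hzero

end FourTransversals

theorem four_transversals_imply_regulus (h2 : (2 : K) ≠ 0)
    (A B C D : Subsp K) (hA : isLine A) (hB : isLine B) (hC : isLine C)
    (hD : isLine D)
    (hAB : skew A B) (hAC : skew A C) (hAD : skew A D)
    (hBC : skew B C) (hBD : skew B D) (hCD : skew C D)
    (T : Fin 4 → Subsp K) (hT : ∀ n, isLine (T n))
    (hTinj : Function.Injective T)
    (hTtrans : ∀ n, meets (T n) A ∧ meets (T n) B ∧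
      meets (T n) C ∧ meets (T n) D) :
    regulus4 A B C D := by
  classical
  obtain ⟨uA, vA, hiA, hsA⟩ := FourTransversals.line_rep A hA
  obtain ⟨uB, vB, hiB, hsB⟩ := FourTransversals.line_rep B hB
  obtain ⟨uC, vC, hiC, hsC⟩ := FourTransversals.line_rep C hC
  obtain ⟨uD, vD, hiD, hsD⟩ := FourTransversals.line_rep D hD
  obtain ⟨u0, v0, hi0, hs0⟩ := FourTransversals.line_rep (T 0) (hT 0)
  obtain ⟨u1, v1, hi1, hs1⟩ := FourTransversals.line_rep (T 1) (hT 1)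
  obtain ⟨u2, v2, hi2, hs2⟩ := FourTransversals.line_rep (T 2) (hT 2)
  set a := FourTransversals.pl uA vA with ha
  set b := FourTransversals.pl uB vB with hb
  set c := FourTransversals.pl uC vC with hc
  set d := FourTransversals.pl uD vD with hd
  set t0 := FourTransversals.pl u0 v0 with ht0
  set t1 := FourTransversals.pl u1 v1 with ht1
  set t2 := FourTransversals.pl u2 v2 with ht2
  have fab : FourTransversals.F a b ≠ 0 :=
    (FourTransversals.skew_iff_F hA hB hsA hsB).mp hAB
  have fac : FourTransversals.F a c ≠ 0 :=
    (FourTransversals.skew_iff_F hA hC hsA hsC).mp hAC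
  have fad : FourTransversals.F a d ≠ 0 :=
    (FourTransversals.skew_iff_F hA hD hsA hsD).mp hAD
  have fbc : FourTransversals.F b c ≠ 0 :=
    (FourTransversals.skew_iff_F hB hC hsB hsC).mp hBC
  have fbd : FourTransversals.F b d ≠ 0 :=
    (FourTransversals.skew_iff_F hB hD hsB hsD).mp hBD
  have fcd : FourTransversals.F c d ≠ 0 :=
    (FourTransversals.skew_iff_F hC hD hsC hsD).mp hCD
  -- the transversals are pairwise skew
  have hTS : ∀ i j : Fin 4, i ≠ j → skew (T i) (T j) := by
    intro i j hij
    obtain ⟨hia, hib, hic, _⟩ := hTtrans i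
    obtain ⟨hja, hjb, hjc, _⟩ := hTtrans j
    exact FourTransversals.transversal_skew hA hB hC (hT i) (hT j) hAB hAC hBC
      hia hib hic hja hjb hjc (fun h => hij (hTinj h))
  have f01 : FourTransversals.F t0 t1 ≠ 0 :=
    (FourTransversals.skew_iff_F (hT 0) (hT 1) hs0 hs1).mp (hTS 0 1 (by decide))
  have f02 : FourTransversals.F t0 t2 ≠ 0 :=
    (FourTransversals.skew_iff_F (hT 0) (hT 2) hs0 hs2).mp (hTS 0 2 (by decide))
  have f12 : FourTransversals.F t1 t2 ≠ 0 :=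
    (FourTransversals.skew_iff_F (hT 1) (hT 2) hs1 hs2).mp (hTS 1 2 (by decide))
  -- incidence relations
  have g0a : FourTransversals.F t0 a = 0 :=
    (FourTransversals.meets_iff_F (hT 0) hA hs0 hsA).mp (hTtrans 0).1
  have g0b : FourTransversals.F t0 b = 0 :=
    (FourTransversals.meets_iff_F (hT 0) hB hs0 hsB).mp (hTtrans 0).2.1
  have g0c : FourTransversals.F t0 c = 0 :=
    (FourTransversals.meets_iff_F (hT 0) hC hs0 hsC).mp (hTtrans 0).2.2.1
  have g0d : FourTransversals.F t0 d = 0 :=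
    (FourTransversals.meets_iff_F (hT 0) hD hs0 hsD).mp (hTtrans 0).2.2.2
  have g1a : FourTransversals.F t1 a = 0 :=
    (FourTransversals.meets_iff_F (hT 1) hA hs1 hsA).mp (hTtrans 1).1
  have g1b : FourTransversals.F t1 b = 0 :=
    (FourTransversals.meets_iff_F (hT 1) hB hs1 hsB).mp (hTtrans 1).2.1
  have g1c : FourTransversals.F t1 c = 0 :=
    (FourTransversals.meets_iff_F (hT 1) hC hs1 hsC).mp (hTtrans 1).2.2.1
  have g1d : FourTransversals.F t1 d = 0 :=
    (FourTransversals.meets_iff_F (hT 1) hD hs1 hsD).mp (hTtrans 1).2.2.2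
  have g2a : FourTransversals.F t2 a = 0 :=
    (FourTransversals.meets_iff_F (hT 2) hA hs2 hsA).mp (hTtrans 2).1
  have g2b : FourTransversals.F t2 b = 0 :=
    (FourTransversals.meets_iff_F (hT 2) hB hs2 hsB).mp (hTtrans 2).2.1
  have g2c : FourTransversals.F t2 c = 0 :=
    (FourTransversals.meets_iff_F (hT 2) hC hs2 hsC).mp (hTtrans 2).2.2.1
  have g2d : FourTransversals.F t2 d = 0 :=
    (FourTransversals.meets_iff_F (hT 2) hD hs2 hsD).mp (hTtrans 2).2.2.2
  -- isotropy
  have haa : FourTransversals.F a a = 0 := FourTransversals.F_self uA vA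
  have hbb : FourTransversals.F b b = 0 := FourTransversals.F_self uB vB
  have hcc : FourTransversals.F c c = 0 := FourTransversals.F_self uC vC
  have hdd : FourTransversals.F d d = 0 := FourTransversals.F_self uD vD
  -- express d as a combination of a, b, c
  obtain ⟨X, Y, Z, hrep⟩ := FourTransversals.span_extract h2 a b c t0 t1 t2 d
    fab fac fbc f01 f02 f12
    (by rw [FourTransversals.F_symm]; exact g0a)
    (by rw [FourTransversals.F_symm]; exact g1a)
    (by rw [FourTransversals.F_symm]; exact g2a)
    (by rw [FourTransversals.F_symm]; exact g0b)
    (by rw [FourTransversals.F_symm]; exact g1b)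
    (by rw [FourTransversals.F_symm]; exact g2b)
    (by rw [FourTransversals.F_symm]; exact g0c)
    (by rw [FourTransversals.F_symm]; exact g1c)
    (by rw [FourTransversals.F_symm]; exact g2c)
    haa hbb hcc
    (FourTransversals.F_self u0 v0) (FourTransversals.F_self u1 v1)
    (FourTransversals.F_self u2 v2)
    (by rw [FourTransversals.F_symm]; exact g0d)
    (by rw [FourTransversals.F_symm]; exact g1d)
    (by rw [FourTransversals.F_symm]; exact g2d)
  -- the coefficients are nonzero
  have hXne : X ≠ 0 := by
    intro h0
    have he : d = Y • b + Z • c := by rw [hrep, h0]; simp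
    exact FourTransversals.coeff_ne h2 hbb hcc hdd fbc fbd fcd he
  have hYne : Y ≠ 0 := by
    intro h0
    have he : d = X • a + Z • c := by rw [hrep, h0]; simp
    exact FourTransversals.coeff_ne h2 haa hcc hdd fac fad fcd he
  have hZne : Z ≠ 0 := by
    intro h0
    have he : d = X • a + Y • b := by rw [hrep, h0]; simp
    exact FourTransversals.coeff_ne h2 haa hbb hdd fab fad fbd he
  refine ⟨⟨hAB, hAC, hAD, hBC, hBD, hCD⟩, ?_⟩
  intro T' hT'
  obtain ⟨s1, s2, hiT', hsT'⟩ := FourTransversals.line_rep T' hT'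
  set τ := FourTransversals.pl s1 s2 with hτ
  have miA : meets T' A ↔ FourTransversals.F τ a = 0 :=
    FourTransversals.meets_iff_F hT' hA hsT' hsA
  have miB : meets T' B ↔ FourTransversals.F τ b = 0 :=
    FourTransversals.meets_iff_F hT' hB hsT' hsB
  have miC : meets T' C ↔ FourTransversals.F τ c = 0 :=
    FourTransversals.meets_iff_F hT' hC hsT' hsC
  have miD : meets T' D ↔ FourTransversals.F τ d = 0 :=
    FourTransversals.meets_iff_F hT' hD hsT' hsD
  have hτd : FourTransversals.F τ d = X * FourTransversals.F τ a
      + Y * FourTransversals.F τ b + Z * FourTransversals.F τ c := by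
    rw [hrep, FourTransversals.F_comb3_right]
  refine ⟨?_, ?_, ?_, ?_⟩
  · intro m1 m2 m3
    rw [miA] at m1; rw [miB] at m2; rw [miC] at m3
    apply miD.mpr
    rw [hτd, m1, m2, m3]
    ring
  · intro m1 m2 m4
    rw [miA] at m1; rw [miB] at m2; rw [miD] at m4
    apply miC.mpr
    have hz : Z * FourTransversals.F τ c = 0 := by
      rw [m1, m2] at hτd
      rw [m4] at hτd
      linear_combination -hτd
    exact (mul_eq_zero.mp hz).resolve_left hZne
  · intro m1 m3 m4
    rw [miA] at m1; rw [miC] at m3; rw [miD] at m4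
    apply miB.mpr
    have hz : Y * FourTransversals.F τ b = 0 := by
      rw [m1, m3] at hτd
      rw [m4] at hτd
      linear_combination -hτd
    exact (mul_eq_zero.mp hz).resolve_left hYne
  · intro m2 m3 m4
    rw [miB] at m2; rw [miC] at m3; rw [miD] at m4
    apply miA.mpr
    have hz : X * FourTransversals.F τ a = 0 := by
      rw [m2, m3] at hτd
      rw [m4] at hτd
      linear_combination -hτd
    exact (mul_eq_zero.mp hz).resolve_left hXne
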